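/- If a clause C is a set-blocked clause for a nonempty subset L ⊆ C with respect to a CNF Γ, then Γ and Γ ∪ {C} are equisatisfiable. -/
import Mathlib


open Classical

abbrev Var := ℕ
abbrev Lit := Var × Bool

def negLit (l : Lit) : Lit := (l.1, !l.2)

abbrev Clause := Finset Lit

/-- A set of literals is tautological if it contains a complementary pair. -/
def Tauto (S : Finset Lit) : Prop := ∃ l ∈ S, negLit l ∈ S

abbrev CNF := Set Clause

abbrev Assign := Var → Bool

def SatLit (α : Assign) (l : Lit) : Prop := α l.1 = l.2
def SatClause (α : Assign) (C : Clause) : Prop := ∃ l ∈ C, SatLit α l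
def SatCNF (α : Assign) (Γ : CNF) : Prop := ∀ C ∈ Γ, SatClause α C
def Satisfiable (Γ : CNF) : Prop := ∃ α, SatCNF α Γ
def Equisat (Γ Δ : CNF) : Prop := Satisfiable Γ ↔ Satisfiable Δ

/-- `C` is a blocked clause for the literal `p` with respect to `Γ`. -/
def Blocked (C : Clause) (p : Lit) (Γ : CNF) : Prop :=
  p ∈ C ∧ ∀ D ∈ Γ, negLit p ∈ D → Tauto (C.erase p ∪ D.erase (negLit p))

def negSet (L : Finset Lit) : Finset Lit := L.image negLit

/-- `C` is a set-blocked clause for `L` with respect to `Γ`. -/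
def SetBlocked (C : Clause) (L : Finset Lit) (Γ : CNF) : Prop :=
  L.Nonempty ∧ L ⊆ C ∧
    ∀ D ∈ Γ, (D ∩ negSet L).Nonempty → D ∩ L = ∅ →
      Tauto ((C \ L) ∪ (D \ negSet L))

def varsClause (C : Clause) : Finset Var := C.image Prod.fst
def varsCNF (Γ : CNF) : Set Var := {v | ∃ C ∈ Γ, v ∈ varsClause C}

/-- Partial assignments. -/
abbrev PAssign := Var → Option Bool

def restrictClause (α : PAssign) (C : Clause) : Clause :=
  C.filter fun l => α l.1 ≠ some (!l.2)

def PSatClause' (α : PAssign) (C : Clause) : Prop := ∃ l ∈ C, α l.1 = some l.2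

def restrictCNF (α : PAssign) (Γ : CNF) : CNF :=
  {E | ∃ C ∈ Γ, ¬ PSatClause' α C ∧ E = restrictClause α C}

/-- `E` is a resolvent of `F` and `G`. -/
def Resolvent (E F G : Clause) : Prop :=
  ∃ (x : Var) (A B : Clause), x ∉ varsClause A ∧ x ∉ varsClause B ∧
    F = insert (x, true) A ∧ G = insert (x, false) B ∧
    E = A ∪ B ∧ ¬ Tauto (A ∪ B)

/-- One step of a resolution proof: add a resolvent or a weakening. -/
def ResStep (Γ Γ' : CNF) : Prop :=
  ∃ C, Γ' = Γ ∪ {C} ∧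
    ((∃ F ∈ Γ, ∃ G ∈ Γ, Resolvent C F G) ∨ (∃ D ∈ Γ, D ⊆ C ∧ ¬ Tauto C))

/-- A resolution proof (refutation) of `Γ`. -/
def ResProofOf (Γ : CNF) (prf : List CNF) : Prop :=
  prf.head? = some Γ ∧ (∃ Δ, prf.getLast? = some Δ ∧ (∅ : Clause) ∈ Δ) ∧
    List.Chain' ResStep prf

/-- One step of a unit propagation proof: resolve against a unit clause, or weaken. -/
def UnitStep (Γ Γ' : CNF) : Prop :=
  ∃ C, Γ' = Γ ∪ {C} ∧
    ((∃ l, ({negLit l} : Clause) ∈ Γ ∧ l.1 ∉ varsClause C ∧ insert l C ∈ Γ)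
      ∨ (∃ D ∈ Γ, D ⊆ C ∧ ¬ Tauto C))

/-- `Γ` has a unit propagation refutation. -/
def UPRefutes (Γ : CNF) : Prop :=
  ∃ prf : List CNF, prf.head? = some Γ ∧ (∃ Δ, prf.getLast? = some Δ ∧ (∅ : Clause) ∈ Δ) ∧
    List.Chain' UnitStep prf

def negUnits (L : Finset Lit) : CNF := {C | ∃ p ∈ L, C = {negLit p}}

/-- `Γ ⊢₁ C`. -/
def UPDerives (Γ : CNF) (C : Clause) : Prop := UPRefutes (Γ ∪ negUnits C)

/-- Partial assignments as consistent sets of literals. -/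
def Consistent (α : Set Lit) : Prop := ∀ l ∈ α, negLit l ∉ α
def PSatClause (α : Set Lit) (C : Clause) : Prop := ∃ l ∈ C, l ∈ α
def PSatCNF (α : Set Lit) (Γ : CNF) : Prop := ∀ C ∈ Γ, PSatClause α C
def MinSat (α : Set Lit) (Γ : CNF) : Prop :=
  Consistent α ∧ PSatCNF α Γ ∧ ∀ β ⊂ α, ¬ PSatCNF β Γ

/-- `μ(Γ)`: clauses whose negation minimally satisfies `Γ`. -/
def mu (Γ : CNF) : CNF := {E | MinSat (↑(E.image negLit)) Γ}

/-- Projection of `Γ` onto a literal. -/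
def proj (p : Lit) (Γ : CNF) : CNF := {E | ∃ D ∈ Γ, p ∈ D ∧ E = D.erase p}

/-- set-blocked clauses are redundant. -/
theorem setBlocked_equisat (Γ : CNF) (C : Clause) (L : Finset Lit)
    (hC : ¬ Tauto C) (hΓ : ∀ D ∈ Γ, ¬ Tauto D)
    (hsb : SetBlocked C L Γ) :
    Equisat Γ (Γ ∪ {C}) := by
  obtain ⟨hLne, hLC, hblk⟩ := hsb
  constructor
  · rintro ⟨α, hα⟩
    by_cases hsatC : SatClause α C
    · refine ⟨α, fun D hD => ?_⟩
      rcases hD with hD | hD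
      · exact hα D hD
      · simp only [Set.mem_singleton_iff] at hD
        exact hD ▸ hsatC
    · -- α falsifies C; flip α on L
      have hfals : ∀ l ∈ C, α l.1 = !l.2 := by
        intro l hl
        have : ¬ SatLit α l := fun h => hsatC ⟨l, hl, h⟩
        unfold SatLit at this
        cases h2 : l.2 <;> cases h3 : α l.1 <;> simp_all
      set α' : Assign := fun v =>
        if (v, true) ∈ L then true else if (v, false) ∈ L then false else α v with hα'
      have hnotboth : ∀ v, (v, true) ∈ L → (v, false) ∈ L → False := by
        intro v h1 h2
        exact hC ⟨(v, true), hLC h1, by simpa [negLit] using hLC h2⟩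
      have hLsat : ∀ l ∈ L, α' l.1 = l.2 := by
        intro l hl
        cases h2 : l.2
        · have h1 : (l.1, false) ∈ L := by rwa [← h2, Prod.mk.eta]
          have h3 : (l.1, true) ∉ L := fun h => hnotboth l.1 h h1
          simp [hα', h1, h3]
        · have h1 : (l.1, true) ∈ L := by rwa [← h2, Prod.mk.eta]
          simp [hα', h1]
      have hout : ∀ v, (∀ b, (v, b) ∉ L) → α' v = α v := by
        intro v hv
        simp [hα', hv true, hv false]
      refine ⟨α', fun D hD => ?_⟩
      rcases hD with hD | hD
      · -- D ∈ Γ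
        by_cases hDL : (D ∩ L).Nonempty
        · obtain ⟨l, hl⟩ := hDL
          rw [Finset.mem_inter] at hl
          exact ⟨l, hl.1, hLsat l hl.2⟩
        · rw [Finset.not_nonempty_iff_eq_empty] at hDL
          by_cases hDnL : (D ∩ negSet L).Nonempty
          · obtain ⟨m, hm, hnm⟩ := hblk D hD hDnL hDL
            -- helper for the main case
            have main : ∀ m : Lit, m ∈ C \ L → negLit m ∈ D \ negSet L →
                SatClause α' D := by
              intro m hmC hmD
              rw [Finset.mem_sdiff] at hmC hmD
              have hvar : ∀ b, (m.1, b) ∉ L := by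
                intro b hb
                by_cases hbe : b = m.2
                · exact hmC.2 (by rwa [hbe, Prod.mk.eta] at hb)
                · have hb2 : b = !m.2 := by cases b <;> cases h2 : m.2 <;> simp_all
                  exact hC ⟨m, hmC.1, by rw [hb2] at hb; exact hLC hb⟩
              have : α' m.1 = !m.2 := by
                rw [hout m.1 hvar]; exact hfals m hmC.1
              exact ⟨negLit m, hmD.1, this⟩
            rcases Finset.mem_union.mp hm with hm1 | hm1 <;>
              rcases Finset.mem_union.mp hnm with hm2 | hm2
            · -- both in C \ L : C tautological
              rw [Finset.mem_sdiff] at hm1 hm2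
              exact absurd ⟨m, hm1.1, hm2.1⟩ hC
            · exact main m hm1 hm2
            · have : negLit (negLit m) = m := by simp [negLit]
              exact main (negLit m) hm2 (by rw [this]; exact hm1)
            · rw [Finset.mem_sdiff] at hm1 hm2
              exact absurd ⟨m, hm1.1, hm2.1⟩ (hΓ D hD)
          · -- D touches no variable of L
            rw [Finset.not_nonempty_iff_eq_empty] at hDnL
            obtain ⟨l, hlD, hlsat⟩ := hα D hD
            refine ⟨l, hlD, ?_⟩
            have hvar : ∀ b, (l.1, b) ∉ L := by
              intro b hb
              by_cases hbe : b = l.2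
              · have : l ∈ D ∩ L := Finset.mem_inter.mpr ⟨hlD, by rwa [hbe, Prod.mk.eta] at hb⟩
                simp [hDL] at this
              · have hb2 : b = !l.2 := by cases b <;> cases h2 : l.2 <;> simp_all
                have : l ∈ negSet L := by
                  rw [negSet, Finset.mem_image]
                  exact ⟨(l.1, b), hb, by simp [negLit, hb2]⟩
                have : l ∈ D ∩ negSet L := Finset.mem_inter.mpr ⟨hlD, this⟩
                simp [hDnL] at this
            unfold SatLit at hlsat ⊢
            rw [hout l.1 hvar]; exact hlsat
      · -- D = C
        simp only [Set.mem_singleton_iff] at hD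
        subst hD
        obtain ⟨p, hp⟩ := hLne
        exact ⟨p, hLC hp, hLsat p hp⟩
  · rintro ⟨α, hα⟩
    exact ⟨α, fun D hD => hα D (Or.inl hD)⟩
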